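/- Let G be a labeled block graph, let B' be a support block of G, let c_i ∈ C\{c_h} be a cut vertex of B', and let B_{ij} be an end block of G whose unique cut vertex is c_i. If l_2(B_{ij}) = 1, then γ(G) = γ(G'), where G' is the labeled block graph obtained from G by relabelling max{2 − |r(V(B_{ij}))|, 0} vertices of B_{ij} that have t-label B as R, with priority given to c_i, and keeping every other label the same. -/

import Mathlib

open SimpleGraph
open scoped Classical

/-- The two possible t-labels of a vertex of a labeled block graph. -/
inductive TLabel
  | B
  | R
deriving DecidableEq

/-- A labeled graph: a graph together with labels `M_V(v) = (t v, s v)` on vertices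
and `k e` on (potential) edges. -/
structure LBG (V : Type*) where
  graph : SimpleGraph V
  t : V → TLabel
  s : V → ℕ
  k : Sym2 V → ℕ

variable {V : Type*}

/-- closed neighbourhood `N_G[v]` -/
def cN (G : SimpleGraph V) (v : V) : Set V := insert v {u | G.Adj v u}

/-- open neighbourhood `N_G(v)` -/
def oN (G : SimpleGraph V) (v : V) : Set V := {u | G.Adj v u}

/-- closed neighbourhood `N_G[e]` of an edge -/
def eN (G : SimpleGraph V) (e : Sym2 V) : Set V := {w | ∃ x ∈ e, w ∈ cN G x}

/-- `r(S)`: the vertices of `S` with t-label `R`. -/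
def rSet (H : LBG V) (S : Set V) : Set V := {v | v ∈ S ∧ H.t v = TLabel.R}

/-- An `M_{LVE}`-dominating set of a labeled graph. -/
def IsMLVE (H : LBG V) (L : Set V) : Prop :=
  (∀ v, H.t v = TLabel.R → v ∈ L) ∧
  (∀ v, H.s v ≤ (cN H.graph v ∩ L).ncard) ∧
  (∀ e ∈ H.graph.edgeSet, H.k e ≤ (eN H.graph e ∩ L).ncard) ∧
  (∀ e ∈ H.graph.edgeSet, ∀ f ∈ H.graph.edgeSet, e ≠ f →
    H.k e + H.k f - 1 ≤ ((eN H.graph e ∪ eN H.graph f) ∩ L).ncard)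

/-- `γ(G)`: the minimum cardinality of an `M_{LVE}`-dominating set. -/
noncomputable def gam (H : LBG V) : ℕ :=
  sInf {n | ∃ L : Set V, IsMLVE H L ∧ L.ncard = n}

/-- A liar's vertex-edge dominating set. -/
def IsLiarVE (G : SimpleGraph V) (L : Set V) : Prop :=
  (∀ e ∈ G.edgeSet, 2 ≤ (eN G e ∩ L).ncard) ∧
  (∀ e ∈ G.edgeSet, ∀ f ∈ G.edgeSet, e ≠ f → 3 ≤ ((eN G e ∪ eN G f) ∩ L).ncard)

/-- `v` is a cut vertex of `G`: removing it disconnects two vertices that were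
connected in `G`. -/
def IsCutVertex (G : SimpleGraph V) (v : V) : Prop :=
  ∃ x y : {u : V // u ≠ v}, G.Reachable x.1 y.1 ∧
    ¬ (G.induce {u : V | u ≠ v}).Reachable ⟨x.1, x.2⟩ ⟨y.1, y.2⟩

/-- A vertex set inducing a connected subgraph without a cut vertex. -/
def GoodSet (G : SimpleGraph V) (Bs : Set V) : Prop :=
  (G.induce Bs).Connected ∧ ∀ v, ¬ IsCutVertex (G.induce Bs) v

/-- A block of `G`: a maximal connected subgraph without a cut vertex. -/
def IsBlock (G : SimpleGraph V) (Bs : Set V) : Prop :=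
  GoodSet G Bs ∧ ∀ Bs' : Set V, Bs ⊆ Bs' → GoodSet G Bs' → Bs' = Bs

/-- A block graph: every block is a clique. -/
def IsBlockGraph (G : SimpleGraph V) : Prop :=
  ∀ Bs : Set V, IsBlock G Bs → G.IsClique Bs

/-- `Bs` is an end block of `G` whose unique cut vertex is `c`. -/
def EndBlockWith (G : SimpleGraph V) (Bs : Set V) (c : V) : Prop :=
  IsBlock G Bs ∧ c ∈ Bs ∧ IsCutVertex G c ∧ ∀ c' ∈ Bs, IsCutVertex G c' → c' = c

/-- The cut-tree of `G`: vertices are the blocks and the cut vertices of `G`,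
with an edge joining a block to each cut vertex it contains. -/
def cutTree (G : SimpleGraph V) :
    SimpleGraph ({Bs : Set V // IsBlock G Bs} ⊕ {v : V // IsCutVertex G v}) :=
  SimpleGraph.fromRel (fun a b =>
    match a, b with
    | Sum.inl Bs, Sum.inr c => (c : V) ∈ (Bs : Set V)
    | _, _ => False)

/-- Distance to the root `ρ` (a cut vertex) in the cut-tree. -/
noncomputable def rootDist (G : SimpleGraph V) (ρ : {v : V // IsCutVertex G v})
    (x : {Bs : Set V // IsBlock G Bs} ⊕ {v : V // IsCutVertex G v}) : ℕ :=
  (cutTree G).dist x (Sum.inr ρ)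

/-- `Bi` is a descendant block of `Bj` in the cut-tree rooted at `ρ`:
`Bj` is the parent of the parent of `Bi`. -/
def IsDescBlock (G : SimpleGraph V) (ρ : {v : V // IsCutVertex G v})
    (Bj Bi : {Bs : Set V // IsBlock G Bs}) : Prop :=
  ∃ c : {v : V // IsCutVertex G v}, (c : V) ∈ (Bi : Set V) ∧ (c : V) ∈ (Bj : Set V) ∧
    rootDist G ρ (Sum.inr c) + 1 = rootDist G ρ (Sum.inl Bi) ∧
    rootDist G ρ (Sum.inl Bj) + 1 = rootDist G ρ (Sum.inr c)

/-- A support block: all of its descendant blocks are end blocks of `G`. -/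
def IsSupportBlock (G : SimpleGraph V) (ρ : {v : V // IsCutVertex G v})
    (B' : {Bs : Set V // IsBlock G Bs}) : Prop :=
  ∀ Bi, IsDescBlock G ρ B' Bi → ∃ c : V, EndBlockWith G (Bi : Set V) c

/-- The edges of (the subgraph induced by) a block `Bs`. -/
def blockEdges (G : SimpleGraph V) (Bs : Set V) : Set (Sym2 V) :=
  {e | e ∈ G.edgeSet ∧ ∀ x ∈ e, x ∈ Bs}

/-- Relabel all vertices of `A` with t-label `R`, keeping every other label the same. -/
noncomputable def relabelR (H : LBG V) (A : Set V) : LBG V :=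
  { H with t := fun v => if v ∈ A then TLabel.R else H.t v }

/-- `l_2(c)`: the number of edges of the end blocks whose unique cut vertex is `c`
that are incident to `c` and have k-label `2`. -/
noncomputable def l2cut (H : LBG V) (c : V) : ℕ :=
  ({e : Sym2 V | (∃ Bs : Set V, EndBlockWith H.graph Bs c ∧ e ∈ blockEdges H.graph Bs) ∧
     c ∈ e ∧ H.k e = 2}).ncard


section Helpers

variable {W : Type*} {Γ : SimpleGraph W}

lemma closed_mem_tail {v : W} (p : Γ.Walk v v) (hp : ¬ p.Nil) :
    ∀ x ∈ p.support, x ∈ p.support.tail := by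
  rw [SimpleGraph.Walk.not_nil_iff] at hp
  obtain ⟨u, h, q, rfl⟩ := hp
  intro x hx
  rw [SimpleGraph.Walk.support_cons] at hx ⊢
  rw [List.tail_cons]
  rcases List.mem_cons.mp hx with rfl | hx
  · exact q.end_mem_support
  · exact hx

lemma walk_in_induce {T : Set W} {a b : W} (p : Γ.Walk a b) (hp : ∀ x ∈ p.support, x ∈ T)
    (ha : a ∈ T) (hb : b ∈ T) :
    ∃ q : (Γ.induce T).Walk ⟨a, ha⟩ ⟨b, hb⟩, q.support.map Subtype.val = p.support := by
  induction p with
  | nil => exact ⟨.nil, rfl⟩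
  | @cons a c b h q ih =>
    have hc : c ∈ T := hp c (by simp)
    obtain ⟨q', hq'⟩ := ih (fun x hx => hp x (by simp [hx])) hc hb
    refine ⟨.cons (show (Γ.induce T).Adj ⟨a, ha⟩ ⟨c, hc⟩ from h) q', ?_⟩
    simp [hq']

lemma reach_avoid {b : W} : ∀ {a : W} (q : Γ.Walk a b), q.support.Nodup →
    ∀ x ∈ q.support, ∀ (hx : x ≠ b) (hab : a ≠ b),
      (Γ.induce {u | u ≠ b}).Reachable ⟨x, hx⟩ ⟨a, hab⟩ := by
  intro a q
  induction q with
  | nil =>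
    intro _ x hx hxb _
    simp only [SimpleGraph.Walk.support_nil, List.mem_singleton] at hx
    exact absurd hx hxb
  | @cons a c b h q ih =>
    intro hnd x hx hxb hab
    rw [SimpleGraph.Walk.support_cons] at hx
    rcases List.mem_cons.mp hx with rfl | hx
    · exact Reachable.refl _
    · have hnd' : q.support.Nodup := (List.nodup_cons.mp hnd).2
      have hcb : c ≠ b := by
        rintro rfl
        have hnn : ¬ q.Nil := by
          intro hnil
          rw [SimpleGraph.Walk.nil_iff_support_eq] at hnil
          rw [hnil] at hx
          exact hxb (List.mem_singleton.mp hx)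
        have := closed_mem_tail q hnn c q.start_mem_support
        have hcons := q.support_eq_cons
        rw [hcons] at hnd'
        exact (List.nodup_cons.mp hnd').1 (by rw [hcons] at this; simpa using this)
      have hr := ih hnd' x hx hxb hcb
      have hadj : (Γ.induce {u | u ≠ b}).Adj ⟨c, hcb⟩ ⟨a, hab⟩ := h.symm
      exact hr.trans hadj.reachable

lemma conn_of_cover {v : W} (c : Γ.Walk v v) (hall : ∀ x : W, x ∈ c.support) :
    Γ.Connected := by
  rw [connected_iff]
  refine ⟨fun x y => ?_, ⟨v⟩⟩
  exact (Reachable.symm ⟨c.takeUntil x (hall x)⟩).trans ⟨c.takeUntil y (hall y)⟩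

lemma nocut_of_cycle {v : W} (c : Γ.Walk v v) (hnd : c.support.tail.Nodup)
    (hnn : ¬ c.Nil) (hall : ∀ x : W, x ∈ c.support) (z : W) : ¬ IsCutVertex Γ z := by
  rintro ⟨x, y, -, hnr⟩
  apply hnr
  have hrot := SimpleGraph.Walk.support_rotate c z (hall z)
  set c' := c.rotate z (hall z) with hc'
  have htail : c'.support.tail.Nodup := hrot.nodup_iff.mpr hnd
  have hne : c.support.tail ≠ [] := by
    rw [SimpleGraph.Walk.not_nil_iff] at hnn
    obtain ⟨u, h, q, rfl⟩ := hnn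
    rw [SimpleGraph.Walk.support_cons, List.tail_cons]
    exact q.support_ne_nil
  have hnn' : ¬ c'.Nil := by
    intro hnil
    rw [SimpleGraph.Walk.nil_iff_support_eq] at hnil
    have : c'.support.tail = [] := by rw [hnil]; rfl
    have hlen := hrot.perm.length_eq
    rw [this] at hlen
    simp only [List.length_nil] at hlen
    exact hne (List.eq_nil_of_length_eq_zero hlen.symm)
  obtain ⟨w, hadj, q, hq⟩ := SimpleGraph.Walk.not_nil_iff.mp hnn'
  have hqsup : q.support = c'.support.tail := by rw [hq, SimpleGraph.Walk.support_cons, List.tail_cons]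
  have hqnd : q.support.Nodup := hqsup ▸ htail
  have hqall : ∀ u : W, u ≠ z → u ∈ q.support := by
    intro u _
    rw [hqsup]
    exact hrot.mem_iff.mpr (closed_mem_tail c hnn u (hall u))
  have hwz : w ≠ z := by
    rintro rfl
    have hnnq : ¬ q.Nil := by
      intro hnil
      rw [SimpleGraph.Walk.nil_iff_support_eq] at hnil
      have := hqall x.1 x.2
      rw [hnil] at this
      exact x.2 (List.mem_singleton.mp this)
    have := closed_mem_tail q hnnq w q.start_mem_support
    have hcons := q.support_eq_cons
    rw [hcons] at hqnd
    exact (List.nodup_cons.mp hqnd).1 (by rw [hcons] at this; simpa using this)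
  have hrx := reach_avoid q hqnd x.1 (hqall x.1 x.2) x.2 hwz
  have hry := reach_avoid q hqnd y.1 (hqall y.1 y.2) y.2 hwz
  exact hrx.trans hry.symm

end Helpers

section Struct

variable {V : Type*}

lemma exists_block_superset [Fintype V] {G : SimpleGraph V} {S : Set V} (h : GoodSet G S) :
    ∃ B, IsBlock G B ∧ S ⊆ B := by
  obtain ⟨B, hB, hmax⟩ := Set.Finite.exists_maximalFor Set.ncard {T : Set V | S ⊆ T ∧ GoodSet G T}
    (Set.toFinite _) ⟨S, subset_rfl, h⟩
  refine ⟨B, ⟨hB.2, fun T hsub hgood => ?_⟩, hB.1⟩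
  have hT : T ∈ {T : Set V | S ⊆ T ∧ GoodSet G T} := ⟨hB.1.trans hsub, hgood⟩
  have heq := hmax (j := T) hT (Set.ncard_le_ncard hsub (Set.toFinite _))
  exact (Set.eq_of_subset_of_ncard_le hsub heq (Set.toFinite _)).symm

lemma goodset_union_cliques {G : SimpleGraph V} {B1 B2 : Set V}
    (h1 : G.IsClique B1) (h2 : G.IsClique B2) {v ci : V}
    (hv1 : v ∈ B1) (hv2 : v ∈ B2) (hc1 : ci ∈ B1) (hc2 : ci ∈ B2) (hne : v ≠ ci) :
    GoodSet G (B1 ∪ B2) := by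
  set U : Set V := B1 ∪ B2 with hU
  have hadj_to : ∀ (x : ↥U) (m : V) (hm1 : m ∈ B1) (hm2 : m ∈ B2), (x : V) ≠ m →
      G.Adj (x : V) m := by
    rintro ⟨x, hx | hx⟩ m hm1 hm2 hxm
    · exact h1 hx hm1 hxm
    · exact h2 hx hm2 hxm
  constructor
  · rw [connected_iff]
    refine ⟨fun x y => ?_, ⟨⟨v, Or.inl hv1⟩⟩⟩
    have hstep : ∀ x : ↥U, (G.induce U).Reachable x ⟨v, Or.inl hv1⟩ := by
      intro x
      by_cases hxv : (x : V) = v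
      · have hx : x = (⟨v, Or.inl hv1⟩ : ↥U) := Subtype.ext hxv
        rw [hx]
      · exact (show (G.induce U).Adj x ⟨v, Or.inl hv1⟩ from hadj_to x v hv1 hv2 hxv).reachable
    exact (hstep x).trans (hstep y).symm
  · rintro z ⟨x, y, -, hnr⟩
    apply hnr
    have hvz_or : (⟨v, Or.inl hv1⟩ : ↥U) ≠ z ∨ (⟨ci, Or.inl hc1⟩ : ↥U) ≠ z := by
      by_cases h : (⟨v, Or.inl hv1⟩ : ↥U) = z
      · right; intro h'; exact hne (by rw [← h'] at h; exact Subtype.ext_iff.mp h)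
      · left; exact h
    obtain ⟨m, hm1, hm2, hmz⟩ : ∃ m : ↥U, (m : V) ∈ B1 ∧ (m : V) ∈ B2 ∧ m ≠ z := by
      rcases hvz_or with h | h
      · exact ⟨⟨v, Or.inl hv1⟩, hv1, hv2, h⟩
      · exact ⟨⟨ci, Or.inl hc1⟩, hc1, hc2, h⟩
    have hstep : ∀ x : {u : ↥U // u ≠ z},
        ((G.induce U).induce {u : ↥U | u ≠ z}).Reachable ⟨x.1, x.2⟩ ⟨m, hmz⟩ := by
      intro x
      by_cases hxm : x.1 = m
      · have hx : (⟨x.1, x.2⟩ : {u : ↥U // u ≠ z}) = ⟨m, hmz⟩ := Subtype.ext hxm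
        rw [hx]
      · have : G.Adj (x.1 : V) (m : V) :=
          hadj_to x.1 m hm1 hm2 (fun hh => hxm (Subtype.ext hh))
        exact (show ((G.induce U).induce {u : ↥U | u ≠ z}).Adj ⟨x.1, x.2⟩ ⟨m, hmz⟩ from this).reachable
    exact (hstep x).trans (hstep y).symm

end Struct

lemma nbhd_subset_of_endblock {V : Type*} [Fintype V] {G : SimpleGraph V}
    (hBG : IsBlockGraph G) {Bij : Set V} {ci : V} (hEnd : EndBlockWith G Bij ci) :
    ∀ v ∈ Bij, v ≠ ci → ∀ u, G.Adj v u → u ∈ Bij := by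
  intro v hv hvci u hadj
  by_contra hu
  have hblk := hEnd.1
  have hciB : ci ∈ Bij := hEnd.2.1
  have hclq : G.IsClique Bij := hBG Bij hblk
  have hadj_vci : G.Adj v ci := hclq hv hciB hvci
  have hnotcut : ¬ IsCutVertex G v := fun h => hvci (hEnd.2.2.2 v hv h)
  have huv : u ≠ v := hadj.ne'
  have hcv : ci ≠ v := Ne.symm hvci
  have hreach : G.Reachable u ci := ⟨.cons hadj.symm (.cons hadj_vci .nil)⟩
  have hr' : (G.induce {x : V | x ≠ v}).Reachable ⟨u, huv⟩ ⟨ci, hcv⟩ := by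
    by_contra hnr
    exact hnotcut ⟨⟨u, huv⟩, ⟨ci, hcv⟩, hreach, hnr⟩
  obtain ⟨W₀⟩ := hr'
  set P := W₀.toPath with hP
  let P' : G.Walk u ci := P.1.map (SimpleGraph.Embedding.induce {x : V | x ≠ v}).toHom
  have hPsup : P'.support = P.1.support.map Subtype.val := SimpleGraph.Walk.support_map _ _
  have hPnd : P'.support.Nodup := by
    rw [hPsup]
    exact P.2.support_nodup.map Subtype.val_injective
  have hPv : ∀ x ∈ P'.support, x ≠ v := by
    rw [hPsup]
    rintro x hx
    obtain ⟨⟨y, hy⟩, -, rfl⟩ := List.mem_map.mp hx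
    exact hy
  let c : G.Walk v v := .cons hadj (P'.concat hadj_vci.symm)
  have hcsup : c.support = v :: (P'.support ++ [v]) := by
    show (SimpleGraph.Walk.cons hadj (P'.concat hadj_vci.symm)).support = _
    rw [SimpleGraph.Walk.support_cons, SimpleGraph.Walk.support_concat]
  have hctail : c.support.tail.Nodup := by
    rw [hcsup, List.tail_cons]
    rw [List.nodup_append]
    exact ⟨hPnd, List.nodup_singleton v, by
      intro a ha b hb
      rw [List.mem_singleton] at hb
      subst hb; exact hPv a ha⟩
  set S : Set V := {x : V | x ∈ c.support} with hS
  have hvS : v ∈ S := c.start_mem_support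
  obtain ⟨cHat, hcHat⟩ := walk_in_induce c (fun x hx => hx) hvS hvS
  have hcHatall : ∀ x : ↥S, x ∈ cHat.support := by
    intro x
    have hx : (x : V) ∈ cHat.support.map Subtype.val := by rw [hcHat]; exact x.2
    obtain ⟨y, hy, hyx⟩ := List.mem_map.mp hx
    rwa [show y = x from Subtype.ext hyx] at hy
  have hcHattail : cHat.support.tail.Nodup := by
    have hmt : cHat.support.tail.map Subtype.val = c.support.tail := by
      conv_rhs => rw [← hcHat]
      exact List.map_tail
    have : (cHat.support.tail.map Subtype.val).Nodup := hmt ▸ hctail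
    exact this.of_map
  have hcHatnn : ¬ cHat.Nil := by
    intro hnil
    rw [SimpleGraph.Walk.nil_iff_support_eq] at hnil
    have : c.support = [v] := by
      rw [← hcHat, hnil]; rfl
    rw [hcsup] at this
    simp at this
  have hgoodS : GoodSet G S := by
    refine ⟨conn_of_cover cHat hcHatall, fun z => nocut_of_cycle cHat hcHattail hcHatnn hcHatall z⟩
  obtain ⟨B2, hB2blk, hSB2⟩ := exists_block_superset hgoodS
  have hclq2 : G.IsClique B2 := hBG B2 hB2blk
  have hciS : ci ∈ S := by
    show ci ∈ c.support
    rw [hcsup]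
    exact List.mem_cons_of_mem _ (List.mem_append_left _ P'.end_mem_support)
  have huS : u ∈ S := by
    show u ∈ c.support
    rw [hcsup]
    exact List.mem_cons_of_mem _ (List.mem_append_left _ P'.start_mem_support)
  have hgoodU := goodset_union_cliques hclq hclq2 hv (hSB2 hvS) hciB (hSB2 hciS) hvci
  have hUeq := hblk.2 (Bij ∪ B2) Set.subset_union_left hgoodU
  exact hu (hUeq ▸ (Or.inr (hSB2 huS) : u ∈ Bij ∪ B2))

lemma mem_cN_comm {V : Type*} {G : SimpleGraph V} {u v : V} :
    u ∈ cN G v ↔ v ∈ cN G u := by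
  simp only [cN, Set.mem_insert_iff, Set.mem_setOf_eq]
  constructor
  · rintro (rfl | h)
    exacts [Or.inl rfl, Or.inr h.symm]
  · rintro (rfl | h)
    exacts [Or.inl rfl, Or.inr h.symm]
theorem stmt_1
    {V : Type*} [Fintype V] [DecidableEq V]
    (H : LBG V)
    (hBG : IsBlockGraph H.graph)
    (hk : ∀ e : Sym2 V, H.k e ≤ 2)
    (ρ : {v : V // IsCutVertex H.graph v})
    (B' : {Bs : Set V // IsBlock H.graph Bs})
    (hsupp : IsSupportBlock H.graph ρ B')
    (ch : V) (hchCut : IsCutVertex H.graph ch) (hchB : ch ∈ (B' : Set V))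
    (hchMin : ∀ (c : V) (hc : IsCutVertex H.graph c), c ∈ (B' : Set V) →
      rootDist H.graph ρ (Sum.inr ⟨ch, hchCut⟩) ≤ rootDist H.graph ρ (Sum.inr ⟨c, hc⟩))
    (ci : V) (hciCut : IsCutVertex H.graph ci) (hciB : ci ∈ (B' : Set V)) (hcich : ci ≠ ch)
    (Bij : Set V) (hEnd : EndBlockWith H.graph Bij ci)
    (hl2 : ({e : Sym2 V | e ∈ blockEdges H.graph Bij ∧ ci ∉ e ∧ H.k e = 2}).ncard = 1)
    (A : Set V)
    (hAsub : A ⊆ {v | v ∈ Bij ∧ H.t v = TLabel.B})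
    (hAcard : A.ncard = 2 - (rSet H Bij).ncard)
    (hApri : H.t ci = TLabel.B → A.Nonempty → ci ∈ A) :
    gam H = gam (relabelR H A) := by

  classical
  have hblk := hEnd.1
  have hciBij : ci ∈ Bij := hEnd.2.1
  have hclq : H.graph.IsClique Bij := hBG Bij hblk
  have hK1 : ∀ v ∈ Bij, v ≠ ci → ∀ u, H.graph.Adj v u → u ∈ Bij :=
    nbhd_subset_of_endblock hBG hEnd
  have hcNsup : ∀ w ∈ Bij, Bij ⊆ cN H.graph w := by
    intro w hw b hb
    by_cases hbw : b = w
    · exact Set.mem_insert_iff.mpr (Or.inl hbw)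
    · exact Set.mem_insert_iff.mpr (Or.inr (hclq hw hb (Ne.symm hbw)))
  have hcNsub : ∀ w ∈ Bij, w ≠ ci → cN H.graph w = Bij := by
    intro w hw hwci
    apply Set.Subset.antisymm _ (hcNsup w hw)
    intro y hy
    rcases Set.mem_insert_iff.mp hy with rfl | hy
    · exact hw
    · exact hK1 w hw hwci y hy
  have hE : ({e : Sym2 V | e ∈ blockEdges H.graph Bij ∧ ci ∉ e ∧ H.k e = 2}).Nonempty := by
    apply Set.nonempty_of_ncard_ne_zero
    rw [hl2]
    exact one_ne_zero
  obtain ⟨e₀, he₀BE, he₀ci, he₀k⟩ := hE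
  obtain ⟨x₀, y₀, rfl⟩ : ∃ x y, e₀ = s(x, y) := by
    induction e₀ using Sym2.ind with
    | _ x y => exact ⟨x, y, rfl⟩
  have he₀E : s(x₀, y₀) ∈ H.graph.edgeSet := he₀BE.1
  have hx₀ : x₀ ∈ Bij := he₀BE.2 x₀ (Sym2.mem_mk_left _ _)
  have hy₀ : y₀ ∈ Bij := he₀BE.2 y₀ (Sym2.mem_mk_right _ _)
  have hx₀ci : x₀ ≠ ci := fun h => he₀ci (h ▸ Sym2.mem_mk_left _ _)
  have hy₀ci : y₀ ≠ ci := fun h => he₀ci (h ▸ Sym2.mem_mk_right _ _)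
  have heN₀ : eN H.graph s(x₀, y₀) = Bij := by
    ext w
    constructor
    · rintro ⟨x, hxe, hw⟩
      rcases Sym2.mem_iff.mp hxe with rfl | rfl
      · rw [hcNsub x hx₀ hx₀ci] at hw
        exact hw
      · rw [hcNsub x hy₀ hy₀ci] at hw
        exact hw
    · intro hw
      exact ⟨x₀, Sym2.mem_mk_left _ _, hcNsup x₀ hx₀ hw⟩
  have claim1 : ∀ L : Set V, IsMLVE (relabelR H A) L → IsMLVE H L := by
    rintro L ⟨h1, h2, h3, h4⟩
    refine ⟨fun v hv => h1 v ?_, h2, h3, h4⟩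
    show (if v ∈ A then TLabel.R else H.t v) = TLabel.R
    rw [hv]
    split <;> rfl
  have claim2 : ∀ L : Set V, IsMLVE H L →
      ∃ L', IsMLVE (relabelR H A) L' ∧ L'.ncard ≤ L.ncard := by
    intro L hL
    obtain ⟨hL1, hL2, hL3, hL4⟩ := hL
    rcases Set.eq_empty_or_nonempty A with hA | hA
    · refine ⟨L, ⟨?_, hL2, hL3, hL4⟩, le_rfl⟩
      intro v hv
      have hv' : (if v ∈ A then TLabel.R else H.t v) = TLabel.R := hv
      rw [hA] at hv'
      simp only [Set.mem_empty_iff_false, if_false] at hv'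
      exact hL1 v hv'
    · set rB : Set V := rSet H Bij with hrB
      have hrBL : rB ⊆ Bij ∩ L := fun x hx => ⟨hx.1, hL1 x hx.2⟩
      have hAB : A ⊆ Bij := fun x hx => (hAsub hx).1
      have hAt : ∀ x ∈ A, H.t x = TLabel.B := fun x hx => (hAsub hx).2
      have hArB : Disjoint A rB := by
        rw [Set.disjoint_left]
        intro x hx hxr
        have h1 := hAt x hx
        have h2 := hxr.2
        rw [h1] at h2
        exact TLabel.noConfusion h2
      have hm2 : 2 ≤ (Bij ∩ L).ncard := by
        have h := hL3 s(x₀, y₀) he₀E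
        rwa [he₀k, heN₀] at h
      have hApos : 0 < A.ncard := (Set.ncard_pos (Set.toFinite _)).mpr hA
      have hrB2 : A.ncard + rB.ncard = 2 := by omega
      have hciAr : ci ∈ A ∪ rB := by
        cases h : H.t ci with
        | B => exact Or.inl (hApri h hA)
        | R => exact Or.inr ⟨hciBij, h⟩
      set D : Set V := A \ L with hD
      set C₀ : Set V := (Bij ∩ L) \ (A ∪ rB) with hC₀
      have hC₀eq : C₀ = (Bij ∩ L) \ ((A ∩ L) ∪ rB) := by
        ext x
        simp only [hC₀, Set.mem_diff, Set.mem_inter_iff, Set.mem_union]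
        constructor
        · rintro ⟨⟨h1, h2⟩, h3⟩
          exact ⟨⟨h1, h2⟩, fun h => h3 (by rcases h with ⟨h, -⟩ | h; exacts [Or.inl h, Or.inr h])⟩
        · rintro ⟨⟨h1, h2⟩, h3⟩
          exact ⟨⟨h1, h2⟩, fun h => h3 (by rcases h with h | h; exacts [Or.inl ⟨h, h2⟩, Or.inr h])⟩
      have hsubBL : (A ∩ L) ∪ rB ⊆ Bij ∩ L := by
        rintro x (⟨hx, hxl⟩ | hx)
        · exact ⟨hAB hx, hxl⟩
        · exact hrBL hx
      have hcard1 : C₀.ncard + ((A ∩ L) ∪ rB).ncard = (Bij ∩ L).ncard := by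
        rw [hC₀eq]
        exact Set.ncard_diff_add_ncard_of_subset hsubBL (Set.toFinite _)
      have hcard2 : ((A ∩ L) ∪ rB).ncard = (A ∩ L).ncard + rB.ncard :=
        Set.ncard_union_eq (hArB.mono_left Set.inter_subset_left) (Set.toFinite _) (Set.toFinite _)
      have hDeq : D = A \ (A ∩ L) := by
        ext x
        simp only [hD, Set.mem_diff, Set.mem_inter_iff]
        tauto
      have hcard3 : D.ncard + (A ∩ L).ncard = A.ncard := by
        rw [hDeq]
        exact Set.ncard_diff_add_ncard_of_subset Set.inter_subset_left (Set.toFinite _)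
      have hDC : D.ncard ≤ C₀.ncard := by omega
      obtain ⟨Rm, hRmC, hRmcard⟩ := Set.exists_subset_card_eq hDC
      have hRmBL : Rm ⊆ Bij ∩ L := fun x hx => (hRmC hx).1
      have hRmL : Rm ⊆ L := fun x hx => (hRmBL hx).2
      have hRmB : Rm ⊆ Bij := fun x hx => (hRmBL hx).1
      have hRmA : ∀ x ∈ Rm, x ∉ A := fun x hx hxa => (hRmC hx).2 (Or.inl hxa)
      have hRmrB : ∀ x ∈ Rm, x ∉ rB := fun x hx hxr => (hRmC hx).2 (Or.inr hxr)
      have hRmt : ∀ x ∈ Rm, H.t x = TLabel.B := by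
        intro x hx
        cases h : H.t x with
        | B => rfl
        | R => exact absurd (⟨hRmB hx, h⟩ : x ∈ rB) (hRmrB x hx)
      have hRmci : ∀ x ∈ Rm, x ≠ ci := by
        rintro x hx rfl
        rcases hciAr with h | h
        exacts [hRmA x hx h, hRmrB x hx h]
      set L' : Set V := (L \ Rm) ∪ A with hL'
      have hL'eq : L' = (L \ Rm) ∪ D := by
        ext x
        simp only [hL', hD, Set.mem_union, Set.mem_diff]
        constructor
        · rintro (h | hxa)
          · exact Or.inl h
          · by_cases hxl : x ∈ L
            · exact Or.inl ⟨hxl, fun hr => hRmA x hr hxa⟩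
            · exact Or.inr ⟨hxa, hxl⟩
        · rintro (h | ⟨h1, h2⟩)
          exacts [Or.inl h, Or.inr h1]
      have hdisjLD : Disjoint (L \ Rm) D := by
        rw [Set.disjoint_left]
        rintro x ⟨hxl, -⟩ ⟨-, hxnl⟩
        exact hxnl hxl
      have hcardL' : L'.ncard = L.ncard := by
        rw [hL'eq, Set.ncard_union_eq hdisjLD (Set.toFinite _) (Set.toFinite _)]
        have h := Set.ncard_diff_add_ncard_of_subset hRmL (Set.toFinite _)
        omega
      have hkey : ∀ SS : Set V, (∀ u ∈ Rm, u ∈ SS → Bij ⊆ SS) →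
          (SS ∩ L).ncard ≤ (SS ∩ L').ncard := by
        intro SS hSS
        by_cases hinter : ∃ u ∈ Rm, u ∈ SS
        · obtain ⟨u, hu, huS⟩ := hinter
          have hBS : Bij ⊆ SS := hSS u hu huS
          have h1 : SS ∩ L' = ((SS ∩ L) \ Rm) ∪ D := by
            ext x
            constructor
            · rintro ⟨hxS, hx⟩
              rcases hx with ⟨hxL, hxR⟩ | hxA
              · exact Or.inl ⟨⟨hxS, hxL⟩, hxR⟩
              · by_cases hxL : x ∈ L
                · exact Or.inl ⟨⟨hxS, hxL⟩, fun hr => hRmA x hr hxA⟩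
                · exact Or.inr ⟨hxA, hxL⟩
            · rintro (⟨⟨hxS, hxL⟩, hxR⟩ | ⟨hxA, hxL⟩)
              · exact ⟨hxS, Or.inl ⟨hxL, hxR⟩⟩
              · exact ⟨hBS (hAB hxA), Or.inr hxA⟩
          have hRmsub : Rm ⊆ SS ∩ L := fun x hx => ⟨hBS (hRmB hx), hRmL hx⟩
          have e1 : ((SS ∩ L) \ Rm).ncard + Rm.ncard = (SS ∩ L).ncard :=
            Set.ncard_diff_add_ncard_of_subset hRmsub (Set.toFinite _)
          have hdisj2 : Disjoint ((SS ∩ L) \ Rm) D := by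
            rw [Set.disjoint_left]
            rintro x ⟨⟨-, hxl⟩, -⟩ ⟨-, hxnl⟩
            exact hxnl hxl
          have e2 : (SS ∩ L').ncard = ((SS ∩ L) \ Rm).ncard + D.ncard := by
            rw [h1, Set.ncard_union_eq hdisj2 (Set.toFinite _) (Set.toFinite _)]
          omega
        · push_neg at hinter
          apply Set.ncard_le_ncard _ (Set.toFinite _)
          rintro x ⟨hxS, hxL⟩
          exact ⟨hxS, Or.inl ⟨hxL, fun h => hinter x h hxS⟩⟩
      have hprem_cN : ∀ v : V, ∀ u ∈ Rm, u ∈ cN H.graph v → Bij ⊆ cN H.graph v := by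
        intro v u hu huv
        have hvB : v ∈ Bij := by
          have hvu : v ∈ cN H.graph u := mem_cN_comm.mp huv
          rwa [hcNsub u (hRmB hu) (hRmci u hu)] at hvu
        exact hcNsup v hvB
      have hprem_eN : ∀ e : Sym2 V, ∀ u ∈ Rm, u ∈ eN H.graph e → Bij ⊆ eN H.graph e := by
        intro e u hu hue
        obtain ⟨w, hwe, huw⟩ := hue
        have hwB : w ∈ Bij := by
          have h := mem_cN_comm.mp huw
          rwa [hcNsub u (hRmB hu) (hRmci u hu)] at h
        intro b hb
        exact ⟨w, hwe, hcNsup w hwB hb⟩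
      refine ⟨L', ⟨?_, ?_, ?_, ?_⟩, le_of_eq hcardL'⟩
      · intro v hv
        have hv' : (if v ∈ A then TLabel.R else H.t v) = TLabel.R := hv
        by_cases hvA : v ∈ A
        · exact Or.inr hvA
        · rw [if_neg hvA] at hv'
          have hvL : v ∈ L := hL1 v hv'
          have hvRm : v ∉ Rm := fun h => by
            rw [hRmt v h] at hv'
            exact TLabel.noConfusion hv'
          exact Or.inl ⟨hvL, hvRm⟩
      · intro v
        exact (hL2 v).trans (hkey (cN H.graph v) (hprem_cN v))
      · intro e he
        exact (hL3 e he).trans (hkey (eN H.graph e) (hprem_eN e))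
      · intro e he f hf hef
        refine (hL4 e he f hf hef).trans (hkey (eN H.graph e ∪ eN H.graph f) ?_)
        intro u hu huef
        rcases huef with h | h
        · exact (hprem_eN e u hu h).trans Set.subset_union_left
        · exact (hprem_eN f u hu h).trans Set.subset_union_right
  have hsub : {n | ∃ L : Set V, IsMLVE (relabelR H A) L ∧ L.ncard = n} ⊆
      {n | ∃ L : Set V, IsMLVE H L ∧ L.ncard = n} := by
    rintro n ⟨L, hL, rfl⟩
    exact ⟨L, claim1 L hL, rfl⟩
  unfold gam
  by_cases hne : {n | ∃ L : Set V, IsMLVE H L ∧ L.ncard = n}.Nonempty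
  · obtain ⟨L, hL, hLn⟩ := Nat.sInf_mem hne
    obtain ⟨L', hL', hle⟩ := claim2 L hL
    have hne' : {n | ∃ L : Set V, IsMLVE (relabelR H A) L ∧ L.ncard = n}.Nonempty :=
      ⟨L'.ncard, L', hL', rfl⟩
    apply le_antisymm
    · exact Nat.sInf_le (hsub (Nat.sInf_mem hne'))
    · calc sInf {n | ∃ L : Set V, IsMLVE (relabelR H A) L ∧ L.ncard = n}
          ≤ L'.ncard := Nat.sInf_le ⟨L', hL', rfl⟩
        _ ≤ L.ncard := hle
        _ = sInf {n | ∃ L : Set V, IsMLVE H L ∧ L.ncard = n} := hLn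
  · rw [Set.not_nonempty_iff_eq_empty] at hne
    have hne' : {n | ∃ L : Set V, IsMLVE (relabelR H A) L ∧ L.ncard = n} = ∅ :=
      Set.subset_empty_iff.mp (hne ▸ hsub)
    rw [hne, hne']
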